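/- Let $\gamma$ denote the Euler--Mascheroni constant and set $\widetilde{D} = e^{(1-\gamma)/2}$. Then $1 < \widetilde{D} < 2$, and defining $\widetilde{R}_n = \frac{2}{\sqrt{\pi}}\left(\widetilde{D}^{k-1} + (j_n-1)\frac{\widetilde{D}^k - \widetilde{D}^{k-1}}{2^{k-1}}\right)$ for $n \in B_k = \{2^{k-1}+1,\ldots,2^k\}$ with $j_n = n - 2^{k-1}$, one has for all $n \ge 2$: $\widetilde{R}_{n+1} - \widetilde{R}_n \le \left(\frac{4}{\sqrt{\pi}} - \frac{4}{e^{(1-\gamma)/2}\sqrt{\pi}}\right) n^{\log_2\left(e^{(1-\gamma)/2}/2\right)} < 0.44\, n^{-0.695025}$. -/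

import Mathlib

open Real

noncomputable def RseqC (D : ℝ) (n : ℕ) : ℝ :=
  if n ≤ 1 then 1
  else (2 / Real.sqrt π) * (D ^ (Nat.clog 2 n - 1) +
    ((n : ℝ) - 2 ^ (Nat.clog 2 n - 1) - 1) *
      (D ^ Nat.clog 2 n - D ^ (Nat.clog 2 n - 1)) / 2 ^ (Nat.clog 2 n - 1))

/-- Taylor-type upper bound for `log (1+y)`. -/
lemma log_upper_aux {y : ℝ} (h0 : 0 < y) (h1 : y < 1) :
    Real.log (1 + y) ≤ y - y ^ 2 / 2 + y ^ 3 / 3 - y ^ 4 / 4 + y ^ 5 / (1 - y) := by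
  have habs : |(-y)| < 1 := by rw [abs_neg, abs_of_pos h0]; exact h1
  have h := Real.abs_log_sub_add_sum_range_le habs 4
  rw [abs_neg, abs_of_pos h0] at h
  have hs : (∑ i ∈ Finset.range 4, (-y) ^ (i + 1) / (i + 1)) =
      -y + y ^ 2 / 2 - y ^ 3 / 3 + y ^ 4 / 4 := by
    simp [Finset.sum_range_succ]; ring
  rw [hs, sub_neg_eq_add] at h
  have h' := (abs_le.mp h).2
  linarith

/-- Per-term bound: `log (m+1) - log m - 1/(m+1) ≤ 1/(2m(m+1)) - 1/(6m(m+1)(m+2))`. -/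
lemma term_le {m : ℕ} (hm : 7 ≤ m) :
    Real.log (m + 1) - Real.log m ≤
      1 / (m + 1) + (1 / (2 * m * (m + 1)) - 1 / (6 * m * (m + 1) * (m + 2))) := by
  set x : ℝ := (m : ℝ) with hxdef
  have hx7 : (7 : ℝ) ≤ x := by rw [hxdef]; exact_mod_cast hm
  have hx0 : (0 : ℝ) < x := by linarith
  have hx1 : (1 : ℝ) < x := by linarith
  have hy0 : (0 : ℝ) < 1 / x := by positivity
  have hy1 : 1 / x < 1 := by rw [div_lt_one hx0]; linarith
  have hlog : Real.log (x + 1) - Real.log x = Real.log (1 + 1 / x) := by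
    rw [show (1 : ℝ) + 1 / x = (x + 1) / x by field_simp, Real.log_div (by linarith) hx0.ne']
  have hub := log_upper_aux hy0 hy1
  have hkey : 1 / x - (1 / x) ^ 2 / 2 + (1 / x) ^ 3 / 3 - (1 / x) ^ 4 / 4 +
      (1 / x) ^ 5 / (1 - 1 / x) ≤
      1 / (x + 1) + (1 / (2 * x * (x + 1)) - 1 / (6 * x * (x + 1) * (x + 2))) := by
    have hnum : 0 ≤ 3 * x ^ 4 - 14 * x ^ 3 - 31 * x ^ 2 - 30 * x := by
      nlinarith [mul_nonneg (mul_nonneg (sub_nonneg.2 hx7) hx0.le) (mul_nonneg hx0.le hx0.le),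
        mul_nonneg (sub_nonneg.2 hx7) (mul_nonneg hx0.le hx0.le),
        mul_nonneg (sub_nonneg.2 hx7) hx0.le]
    have hid : 1 / (x + 1) + (1 / (2 * x * (x + 1)) - 1 / (6 * x * (x + 1) * (x + 2))) -
        (1 / x - (1 / x) ^ 2 / 2 + (1 / x) ^ 3 / 3 - (1 / x) ^ 4 / 4 +
          (1 / x) ^ 5 / (1 - 1 / x)) =
        (3 * x ^ 4 - 14 * x ^ 3 - 31 * x ^ 2 - 30 * x) /
          (12 * x ^ 5 * (x - 1) * (x + 1) * (x + 2)) := by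
      have h1 : x - 1 ≠ 0 := by linarith
      have h2 : x + 1 ≠ 0 := by linarith
      have h3 : x + 2 ≠ 0 := by linarith
      have h4 : 1 - 1 / x = (x - 1) / x := by field_simp
      rw [h4]
      field_simp
      ring
    have hden : 0 < 12 * x ^ 5 * (x - 1) * (x + 1) * (x + 2) :=
      mul_pos (mul_pos (mul_pos (by positivity) (by linarith : (0:ℝ) < x - 1))
        (by linarith : (0:ℝ) < x + 1)) (by linarith : (0:ℝ) < x + 2)
    have := div_nonneg hnum hden.le
    linarith [hid ▸ this]
  push_cast
  rw [hlog]
  exact hub.trans hkey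

lemma gamma_lower :
    (harmonic 64 : ℝ) - Real.log 64 - (1 / 128 - 1 / 49920) ≤ Real.eulerMascheroniConstant := by
  refine ge_of_tendsto Real.tendsto_harmonic_sub_log ?_
  filter_upwards [Filter.eventually_ge_atTop 64] with M hM
  -- by induction: harmonic 64 - log 64 - (c 64 - c M) ≤ harmonic M - log M
  -- where c m = 1/(2m) - 1/(12 m (m+1))
  have main : ∀ M : ℕ, 64 ≤ M →
      (harmonic 64 : ℝ) - Real.log 64 -
        ((1 / 128 - 1 / 49920) - (1 / (2 * M) - 1 / (12 * M * (M + 1)))) ≤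
      (harmonic M : ℝ) - Real.log M := by
    intro M hM
    induction M, hM using Nat.le_induction with
    | base => norm_num
    | succ M hM ih =>
      have hM0 : (0 : ℝ) < M := Nat.cast_pos.mpr (by omega)
      have hterm := term_le (m := M) (by omega)
      have hharm : (harmonic (M + 1) : ℝ) = (harmonic M : ℝ) + 1 / (M + 1) := by
        rw [harmonic_succ]; push_cast; ring
      have hMc : (0:ℝ) < (M:ℝ) := by exact_mod_cast (by omega : 0 < M)
      have htel : (1 / (2 * (M:ℝ)) - 1 / (12 * M * (M + 1))) -
          (1 / (2 * ((M:ℝ) + 1)) - 1 / (12 * (M + 1) * (M + 1 + 1))) =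
          1 / (2 * M * (M + 1)) - 1 / (6 * M * (M + 1) * (M + 2)) := by
        have h1 : (M:ℝ) + 1 ≠ 0 := by positivity
        have h2 : (M:ℝ) + 2 ≠ 0 := by positivity
        field_simp
        ring
      have hcast : ((M + 1 : ℕ) : ℝ) = (M : ℝ) + 1 := by push_cast; ring
      rw [hcast, hharm]
      have := hterm
      -- log (M+1) - log M ≤ 1/(M+1) + (...)
      linarith [htel, this, ih]
  have h0 : (0:ℝ) ≤ 1 / (2 * (M:ℝ)) - 1 / (12 * M * (M + 1)) := by
    have hM0 : (0:ℝ) < (M:ℝ) := by exact_mod_cast (by omega : 0 < M)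
    rw [sub_nonneg, div_le_div_iff₀ (by positivity) (by positivity)]
    nlinarith
  linarith [main M hM]

lemma gamma_gt : (0.5772153 : ℝ) < Real.eulerMascheroniConstant := by
  have h := gamma_lower
  have hh : harmonic 64 = 623171679694215690971693339 / 131362987122535807501262400 := by
    norm_num [harmonic, Finset.sum_range_succ]
  have hlog : Real.log 64 = 6 * Real.log 2 := by
    rw [show (64 : ℝ) = 2 ^ 6 by norm_num, Real.log_pow]; push_cast; ring
  have hl2 := Real.log_two_lt_d9
  rw [hh, hlog] at h
  have : ((623171679694215690971693339 / 131362987122535807501262400 : ℚ) : ℝ) =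
      623171679694215690971693339 / 131362987122535807501262400 := by push_cast; ring
  rw [this] at h
  nlinarith

/-- The difference of consecutive terms. -/
lemma RseqC_diff (D : ℝ) {n : ℕ} (hn : 2 ≤ n) :
    RseqC D (n + 1) - RseqC D n =
      2 / Real.sqrt π * ((D ^ Nat.clog 2 n - D ^ (Nat.clog 2 n - 1)) / 2 ^ (Nat.clog 2 n - 1)) := by
  have hk1 : 1 ≤ Nat.clog 2 n := by
    have := (Nat.lt_clog_iff_pow_lt one_lt_two (x := n) (y := 0)).mpr (by simpa using (by omega : 1 < n))
    omega
  obtain ⟨j, hj⟩ : ∃ j, Nat.clog 2 n = j + 1 := ⟨Nat.clog 2 n - 1, by omega⟩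
  have hub : n ≤ 2 ^ (j + 1) := hj ▸ Nat.le_pow_clog one_lt_two n
  have hlb : 2 ^ j < n := by
    have := Nat.pow_pred_clog_lt_self one_lt_two (by omega : 1 < n)
    rw [hj] at this
    simpa using this
  rw [RseqC, RseqC, if_neg (by omega), if_neg (by omega), hj, Nat.add_sub_cancel]
  by_cases hcase : n + 1 ≤ 2 ^ (j + 1)
  · have hclog : Nat.clog 2 (n + 1) = j + 1 := by
      have h1 : Nat.clog 2 (n + 1) ≤ j + 1 := (Nat.clog_le_iff_le_pow one_lt_two).mpr hcase
      have h2 : j < Nat.clog 2 (n + 1) := (Nat.lt_clog_iff_pow_lt one_lt_two).mpr (by omega)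
      omega
    rw [hclog, Nat.add_sub_cancel]
    push_cast
    have h2j : ((2 : ℝ)) ^ j ≠ 0 := by positivity
    field_simp
    ring
  · have hn2 : n = 2 ^ (j + 1) := by omega
    have hclog : Nat.clog 2 (n + 1) = j + 2 := by
      have h1 : Nat.clog 2 (n + 1) ≤ j + 2 := (Nat.clog_le_iff_le_pow one_lt_two).mpr
        (by rw [hn2]; rw [pow_succ (2:ℕ) (j+1)]; omega)
      have h2 : j + 1 < Nat.clog 2 (n + 1) := (Nat.lt_clog_iff_pow_lt one_lt_two).mpr (by omega)
      omega
    rw [hclog]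
    have hcast : ((n : ℝ)) = 2 ^ (j + 1) := by rw [hn2]; push_cast; ring
    have hred : j + 2 - 1 = j + 1 := rfl
    rw [hred]
    push_cast
    rw [hcast]
    have h2j : ((2 : ℝ)) ^ j ≠ 0 := by positivity
    field_simp
    ring

theorem complex_fundamental_lemma :
    (1 < Real.exp ((1 - Real.eulerMascheroniConstant) / 2) ∧
      Real.exp ((1 - Real.eulerMascheroniConstant) / 2) < 2) ∧
    ∀ n : ℕ, 2 ≤ n →
      RseqC (Real.exp ((1 - Real.eulerMascheroniConstant) / 2)) (n + 1) -
          RseqC (Real.exp ((1 - Real.eulerMascheroniConstant) / 2)) n ≤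
        (4 / Real.sqrt π - 4 / (Real.exp ((1 - Real.eulerMascheroniConstant) / 2) * Real.sqrt π)) *
          (n : ℝ) ^ (Real.logb 2 (Real.exp ((1 - Real.eulerMascheroniConstant) / 2) / 2)) ∧
      (4 / Real.sqrt π - 4 / (Real.exp ((1 - Real.eulerMascheroniConstant) / 2) * Real.sqrt π)) *
          (n : ℝ) ^ (Real.logb 2 (Real.exp ((1 - Real.eulerMascheroniConstant) / 2) / 2)) <
        0.44 * (n : ℝ) ^ (-(0.695025 : ℝ)) := by
  set γ := Real.eulerMascheroniConstant with hγdef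
  set x : ℝ := (1 - γ) / 2 with hxdef
  set D : ℝ := Real.exp x with hDdef
  have hg0 : (0.5772153 : ℝ) < γ := gamma_gt
  have hγ1 : γ < 1 := by
    have := Real.eulerMascheroniConstant_lt_two_thirds
    rw [← hγdef] at this; linarith
  have hx_pos : 0 < x := by rw [hxdef]; linarith
  have hx0 : x ≤ 0.21139235 := by rw [hxdef]; linarith
  have hl2lo := Real.log_two_gt_d9
  have hl2hi := Real.log_two_lt_d9
  have hD1 : 1 < D := by
    rw [hDdef, show (1:ℝ) = Real.exp 0 by rw [Real.exp_zero], Real.exp_lt_exp]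
    exact hx_pos
  have hD0 : (0:ℝ) < D := Real.exp_pos x
  have hD2 : D < 2 := by
    rw [hDdef, show (2:ℝ) = Real.exp (Real.log 2) by rw [Real.exp_log two_pos],
      Real.exp_lt_exp]
    linarith
  -- upper bound on D
  have hDub : D ≤ ((800000000 : ℝ) / 778860765) ^ 8 := by
    have h1 : D ≤ Real.exp 0.21139235 := by rw [hDdef, Real.exp_le_exp]; exact hx0
    have h2 : Real.exp 0.21139235 = Real.exp ((0.21139235 : ℝ) / 8) ^ 8 := by
      rw [← Real.exp_nat_mul]; norm_num
    have h3 : Real.exp ((0.21139235 : ℝ) / 8) ≤ (800000000 : ℝ) / 778860765 := by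
      have h4 := Real.add_one_le_exp (-(0.21139235 / 8) : ℝ)
      have h5 : (0:ℝ) < 1 - 0.21139235 / 8 := by norm_num
      have h6 : Real.exp ((0.21139235 : ℝ) / 8) = (Real.exp (-(0.21139235 / 8) : ℝ))⁻¹ := by
        rw [← Real.exp_neg]; norm_num
      rw [h6]
      have h7 : (1:ℝ) - 0.21139235 / 8 ≤ Real.exp (-(0.21139235 / 8) : ℝ) := by linarith
      have h8 : (Real.exp (-(0.21139235 / 8) : ℝ))⁻¹ ≤ ((1:ℝ) - 0.21139235 / 8)⁻¹ := by
        exact inv_anti₀ h5 h7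
      calc (Real.exp (-(0.21139235 / 8) : ℝ))⁻¹ ≤ ((1:ℝ) - 0.21139235 / 8)⁻¹ := h8
        _ = (800000000 : ℝ) / 778860765 := by norm_num
    calc D ≤ Real.exp 0.21139235 := h1
      _ = Real.exp ((0.21139235 : ℝ) / 8) ^ 8 := h2
      _ ≤ ((800000000 : ℝ) / 778860765) ^ 8 := by
          apply pow_le_pow_left₀ (Real.exp_pos _).le h3
  have hs : (0:ℝ) < Real.sqrt π := Real.sqrt_pos.mpr Real.pi_pos
  have hs0 : (1.7724538 : ℝ) ≤ Real.sqrt π := by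
    have h2 : ((1.7724538 : ℝ)) ^ 2 ≤ π := by
      calc (1.7724538 : ℝ) ^ 2 ≤ 3.14159265358979323846 := by norm_num
        _ ≤ π := Real.pi_gt_d20.le
    calc (1.7724538 : ℝ) = Real.sqrt ((1.7724538 : ℝ) ^ 2) :=
          (Real.sqrt_sq (by norm_num)).symm
      _ ≤ Real.sqrt π := Real.sqrt_le_sqrt h2
  -- the coefficient
  set C : ℝ := 4 / Real.sqrt π - 4 / (D * Real.sqrt π) with hCdef
  have hCeq : C = 4 * (1 - 1 / D) / Real.sqrt π := by
    rw [hCdef]; field_simp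
  have hC_pos : 0 < C := by
    rw [hCeq]
    have h1 : 1 / D < 1 := by rw [div_lt_one hD0]; exact hD1
    exact div_pos (by linarith) hs
  have hC44 : C < 0.44 := by
    rw [hCeq]
    have hDub0 : (0:ℝ) < ((800000000 : ℝ) / 778860765) ^ 8 := by positivity
    have h1 : 1 / ((800000000 : ℝ) / 778860765) ^ 8 ≤ 1 / D :=
      one_div_le_one_div_of_le hD0 hDub
    have h2 : 1 - 1 / D ≤ 1 - 1 / ((800000000 : ℝ) / 778860765) ^ 8 := by linarith
    have h3 : (0:ℝ) ≤ 1 - 1 / D := by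
      have : 1 / D ≤ 1 := by rw [div_le_one hD0]; linarith
      linarith
    calc 4 * (1 - 1 / D) / Real.sqrt π
        ≤ 4 * (1 - 1 / ((800000000 : ℝ) / 778860765) ^ 8) / 1.7724538 := by
          apply div_le_div₀ (by positivity) (by linarith) (by norm_num) hs0
      _ < 0.44 := by norm_num
  -- exponent bound
  have hlogD2 : Real.log (D / 2) = x - Real.log 2 := by
    rw [Real.log_div hD0.ne' two_ne_zero, hDdef, Real.log_exp]
  have hexp_le : Real.logb 2 (D / 2) ≤ -(0.695025 : ℝ) := by
    rw [Real.logb, hlogD2]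
    rw [div_le_iff₀ (by linarith : (0:ℝ) < Real.log 2)]
    nlinarith
  refine ⟨⟨hD1, hD2⟩, fun n hn => ?_⟩
  have hn0' : (0:ℝ) < (n:ℝ) := Nat.cast_pos.mpr (by omega)
  have hn1 : (1:ℝ) ≤ (n:ℝ) := by exact_mod_cast (by omega : 1 ≤ n)
  have hhalf0 : (0:ℝ) < D / 2 := by linarith
  have hhalf1 : D / 2 ≤ 1 := by linarith
  constructor
  · -- first inequality
    rw [RseqC_diff D hn]
    obtain ⟨j, hj⟩ : ∃ j, Nat.clog 2 n = j + 1 := by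
      refine ⟨Nat.clog 2 n - 1, ?_⟩
      have := (Nat.lt_clog_iff_pow_lt one_lt_two (x := n) (y := 0)).mpr
        (by simpa using (by omega : 1 < n))
      omega
    have hub : n ≤ 2 ^ (j + 1) := hj ▸ Nat.le_pow_clog one_lt_two n
    rw [hj, Nat.add_sub_cancel]
    -- rewrite n ^ logb 2 (D/2) as (D/2) ^ logb 2 n
    have hswap : (n : ℝ) ^ Real.logb 2 (D / 2) = (D / 2) ^ Real.logb 2 (n : ℝ) := by
      rw [Real.rpow_def_of_pos hn0', Real.rpow_def_of_pos hhalf0, Real.logb, Real.logb]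
      congr 1
      ring
    have hL : Real.logb 2 (n : ℝ) ≤ (j : ℝ) + 1 := by
      have h1 : Real.log (n : ℝ) ≤ ((j : ℝ) + 1) * Real.log 2 := by
        have h2 : (n : ℝ) ≤ 2 ^ (j + 1) := by exact_mod_cast hub
        calc Real.log (n : ℝ) ≤ Real.log ((2:ℝ) ^ (j + 1)) :=
              Real.log_le_log hn0' h2
          _ = ((j : ℝ) + 1) * Real.log 2 := by rw [Real.log_pow]; push_cast; ring
      rw [Real.logb, div_le_iff₀ (by linarith : (0:ℝ) < Real.log 2)]
      linarith
    have hLHS : 2 / Real.sqrt π * ((D ^ (j + 1) - D ^ j) / 2 ^ j) =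
        (2 / Real.sqrt π * (D - 1)) * (D / 2) ^ ((j : ℝ)) := by
      rw [Real.rpow_natCast, div_pow]
      have h2j : ((2 : ℝ)) ^ j ≠ 0 := by positivity
      field_simp
      ring
    have hRHS : C * (n : ℝ) ^ Real.logb 2 (D / 2) =
        (2 / Real.sqrt π * (D - 1)) * (D / 2) ^ (Real.logb 2 (n : ℝ) - 1) := by
      rw [hswap, Real.rpow_sub hhalf0, Real.rpow_one, hCdef]
      field_simp
      ring
    rw [hLHS, hRHS]
    apply mul_le_mul_of_nonneg_left
    · exact Real.rpow_le_rpow_of_exponent_ge hhalf0 hhalf1 (by linarith)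
    · have : 0 < D - 1 := by linarith
      positivity
  · -- second inequality
    have h1 : (n : ℝ) ^ Real.logb 2 (D / 2) ≤ (n : ℝ) ^ (-(0.695025 : ℝ)) :=
      Real.rpow_le_rpow_of_exponent_le hn1 hexp_le
    have h2 : (0:ℝ) < (n : ℝ) ^ (-(0.695025 : ℝ)) := Real.rpow_pos_of_pos hn0' _
    calc C * (n : ℝ) ^ Real.logb 2 (D / 2) ≤ C * (n : ℝ) ^ (-(0.695025 : ℝ)) :=
          mul_le_mul_of_nonneg_left h1 hC_pos.le
      _ < 0.44 * (n : ℝ) ^ (-(0.695025 : ℝ)) := by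
          exact mul_lt_mul_of_pos_right hC44 h2
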